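/- Let M be a compact smooth m-dimensional manifold embedded in ℝ^(m+k) with k > m+1. Then there exists a linear projection π from ℝ^(m+k) onto a (2m+1)-dimensional subspace such that the restriction of π to M is a smooth embedding of M into ℝ^(2m+1). -/

import Mathlib

open Function Manifold Set Module MeasureTheory ENNReal InnerProductSpace

theorem aux_dimH_image_le {E F : Type*} [NormedAddCommGroup E] [NormedSpace ℝ E]
    [SecondCountableTopology E] [NormedAddCommGroup F] [NormedSpace ℝ F]
    {f : E → F} {s : Set E} (hs : IsOpen s) (hf : ContDiffOn ℝ 1 f s) :
    dimH (f '' s) ≤ dimH s :=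
  dimH_image_le_of_locally_lipschitzOn fun x hx => by
    obtain ⟨C, t, ht, hl⟩ := ((hf x hx).contDiffAt (hs.mem_nhds hx)).exists_lipschitzOnWith
    exact ⟨C, t, nhdsWithin_le_nhds ht, hl⟩

theorem whitney_avoid {m n : ℕ} {M : Type*} [TopologicalSpace M]
    [ChartedSpace (EuclideanSpace ℝ (Fin m)) M]
    [IsManifold (𝓡 m) (⊤ : ℕ∞) M] [CompactSpace M]
    (f : M → EuclideanSpace ℝ (Fin n))
    (hf : ContMDiff (𝓡 m) 𝓘(ℝ, EuclideanSpace ℝ (Fin n)) (⊤ : ℕ∞) f)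
    (hinj : Injective f) (E : Submodule ℝ (EuclideanSpace ℝ (Fin n)))
    (hd : 2 * m + 1 < Module.finrank ℝ E) :
    ∃ v, v ∈ E ∧ v ≠ 0 ∧
      (∀ p q (t : ℝ), f p - f q = t • v → p = q) ∧
      (∀ p (w : EuclideanSpace ℝ (Fin m)) (t : ℝ),
        mfderiv (𝓡 m) 𝓘(ℝ, EuclideanSpace ℝ (Fin n)) f p w = t • v →
        mfderiv (𝓡 m) 𝓘(ℝ, EuclideanSpace ℝ (Fin n)) f p w = 0) := by
  classical
  -- finite chart cover
  obtain ⟨s, hs⟩ := IsCompact.elim_finite_subcover (isCompact_univ (X := M))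
    (fun c : M => (chartAt (EuclideanSpace ℝ (Fin m)) c).source)
    (fun c => (chartAt (EuclideanSpace ℝ (Fin m)) c).open_source)
    (fun p _ => Set.mem_iUnion.2 ⟨p, mem_chart_source (EuclideanSpace ℝ (Fin m)) p⟩)
  -- local representatives
  set F : M → EuclideanSpace ℝ (Fin m) → EuclideanSpace ℝ (Fin n) :=
    fun c => f ∘ (extChartAt (𝓡 m) c).symm with hF
  have hFc : ∀ c : M, ContDiffOn ℝ ((⊤ : ℕ∞) : WithTop ℕ∞) (F c)
      (extChartAt (𝓡 m) c).target := fun c => by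
    rw [← contMDiffOn_iff_contDiffOn]
    exact (hf.contMDiffOn (s := univ)).comp (contMDiffOn_extChartAt_symm c)
      (Set.mapsTo_univ _ _)
  have hFc1 : ∀ c : M, ContDiffOn ℝ 1 (F c) (extChartAt (𝓡 m) c).target :=
    fun c => (hFc c).of_le (by norm_cast)
  have hFc1' : ∀ c : M, ContDiffOn ℝ 1 (fderiv ℝ (F c)) (extChartAt (𝓡 m) c).target :=
    fun c => (hFc c).fderiv_of_isOpen (isOpen_extChartAt_target _)
      (by norm_cast)
  -- the bad set
  set T : Set (EuclideanSpace ℝ (Fin n)) :=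
    ((⋃ c : s, ⋃ c' : s,
      (fun z : EuclideanSpace ℝ (Fin m) × EuclideanSpace ℝ (Fin m) × ℝ =>
          z.2.2 • (F c z.1 - F c' z.2.1)) ''
        ((extChartAt (𝓡 m) (c : M)).target ×ˢ
          ((extChartAt (𝓡 m) (c' : M)).target ×ˢ (Set.univ : Set ℝ)))) ∪
    ((⋃ c : s, (fun z : EuclideanSpace ℝ (Fin m) × EuclideanSpace ℝ (Fin m) =>
          fderiv ℝ (F c) z.1 z.2) ''
        ((extChartAt (𝓡 m) (c : M)).target ×ˢ
          (Set.univ : Set (EuclideanSpace ℝ (Fin m))))) ∪ {0})) with hT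
  -- dimension bound
  have hdom1 : dimH (univ : Set (EuclideanSpace ℝ (Fin m) ×
      EuclideanSpace ℝ (Fin m) × ℝ)) = ((2 * m + 1 : ℕ) : ℝ≥0∞) := by
    rw [Real.dimH_univ_eq_finrank]
    have : finrank ℝ (EuclideanSpace ℝ (Fin m) × EuclideanSpace ℝ (Fin m) × ℝ)
        = 2 * m + 1 := by
      simp only [Module.finrank_prod, finrank_euclideanSpace_fin, Module.finrank_self]
      omega
    rw [this]
  have hdom2 : dimH (univ : Set (EuclideanSpace ℝ (Fin m) ×
      EuclideanSpace ℝ (Fin m))) = ((2 * m : ℕ) : ℝ≥0∞) := by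
    rw [Real.dimH_univ_eq_finrank]
    have : finrank ℝ (EuclideanSpace ℝ (Fin m) × EuclideanSpace ℝ (Fin m)) = 2 * m := by
      simp only [Module.finrank_prod, finrank_euclideanSpace_fin]
      omega
    rw [this]
  have hdim : dimH T ≤ ((2 * m + 1 : ℕ) : ℝ≥0∞) := by
    rw [hT, dimH_union, dimH_union]
    refine max_le ?_ (max_le ?_ ?_)
    · rw [dimH_iUnion]
      refine iSup_le fun c => ?_
      rw [dimH_iUnion]
      refine iSup_le fun c' => ?_
      refine le_trans (aux_dimH_image_le ?_ ?_) ?_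
      · exact (isOpen_extChartAt_target _).prod ((isOpen_extChartAt_target _).prod isOpen_univ)
      · refine ContDiffOn.fun_smul ?_ ?_
        · exact (contDiff_snd.comp contDiff_snd).contDiffOn
        · refine ContDiffOn.sub ?_ ?_
          · exact (hFc1 c).comp contDiff_fst.contDiffOn fun z hz => hz.1
          · exact (hFc1 c').comp ((contDiff_fst.comp contDiff_snd)).contDiffOn
              fun z hz => hz.2.1
      · exact le_trans (dimH_mono (subset_univ _)) (le_of_eq hdom1)
    · rw [dimH_iUnion]
      refine iSup_le fun c => ?_
      refine le_trans (aux_dimH_image_le ?_ ?_) ?_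
      · exact (isOpen_extChartAt_target _).prod isOpen_univ
      · exact ContDiffOn.clm_apply
          ((hFc1' c).comp contDiff_fst.contDiffOn fun z hz => hz.1)
          contDiff_snd.contDiffOn
      · refine le_trans (dimH_mono (subset_univ _)) ?_
        rw [hdom2]
        exact Nat.cast_le.2 (by omega)
    · have : dimH ({0} : Set (EuclideanSpace ℝ (Fin n))) = 0 := dimH_singleton 0
      rw [this]
      exact zero_le
  -- coverage: secants
  have hcover : ∀ p : M, ∃ c ∈ s, p ∈ (chartAt (EuclideanSpace ℝ (Fin m)) c).source :=
    fun p => by simpa using hs (mem_univ p)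
  have hsec : ∀ (p q : M) (t : ℝ), t • (f p - f q) ∈ T := by
    intro p q t
    obtain ⟨c, hc, hpc⟩ := hcover p
    obtain ⟨c', hc', hqc⟩ := hcover q
    have hps : p ∈ (extChartAt (𝓡 m) c).source := by
      simpa [extChartAt_source] using hpc
    have hqs : q ∈ (extChartAt (𝓡 m) c').source := by
      simpa [extChartAt_source] using hqc
    refine Or.inl (Set.mem_iUnion.2 ⟨⟨c, hc⟩, Set.mem_iUnion.2 ⟨⟨c', hc'⟩, ?_⟩⟩)
    refine ⟨(extChartAt (𝓡 m) c p, extChartAt (𝓡 m) c' q, t),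
      ⟨(extChartAt (𝓡 m) c).map_source hps,
        (extChartAt (𝓡 m) c').map_source hqs, trivial⟩, ?_⟩
    simp only [hF, Function.comp_apply,
      (extChartAt (𝓡 m) c).left_inv hps, (extChartAt (𝓡 m) c').left_inv hqs]
  -- coverage: tangents
  have htan : ∀ (p : M) (w : EuclideanSpace ℝ (Fin m)),
      mfderiv (𝓡 m) 𝓘(ℝ, EuclideanSpace ℝ (Fin n)) f p w ∈ T := by
    intro p w
    obtain ⟨c, hc, hpc⟩ := hcover p
    have hps : p ∈ (extChartAt (𝓡 m) c).source := by
      simpa [extChartAt_source] using hpc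
    have h1 : f =ᶠ[nhds p] (F c) ∘ (extChartAt (𝓡 m) c) := by
      filter_upwards [(chartAt (EuclideanSpace ℝ (Fin m)) c).open_source.mem_nhds hpc]
        with x hx
      exact (congrArg f ((extChartAt (𝓡 m) c).left_inv
        (by simpa [extChartAt_source] using hx))).symm
    have hFd : MDifferentiableAt (𝓡 m) 𝓘(ℝ, EuclideanSpace ℝ (Fin n)) (F c)
        (extChartAt (𝓡 m) c p) :=
      mdifferentiableAt_iff_differentiableAt.2
        (((hFc1 c).differentiableOn one_ne_zero).differentiableAt
          ((isOpen_extChartAt_target c).mem_nhds ((extChartAt (𝓡 m) c).map_source hps)))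
    have hed : MDifferentiableAt (𝓡 m) (𝓡 m) (extChartAt (𝓡 m) c) p :=
      mdifferentiableAt_extChartAt hpc
    have heq : mfderiv (𝓡 m) 𝓘(ℝ, EuclideanSpace ℝ (Fin n)) f p =
        (fderiv ℝ (F c) (extChartAt (𝓡 m) c p)).comp
          (mfderiv (𝓡 m) (𝓡 m) (extChartAt (𝓡 m) c) p) := by
      rw [h1.mfderiv_eq, mfderiv_comp p hFd hed, mfderiv_eq_fderiv]
      rfl
    rw [heq]
    refine Or.inr (Or.inl (Set.mem_iUnion.2 ⟨⟨c, hc⟩, ?_⟩))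
    exact ⟨(extChartAt (𝓡 m) c p, mfderiv (𝓡 m) (𝓡 m) (extChartAt (𝓡 m) c) p w),
      ⟨(extChartAt (𝓡 m) c).map_source hps, trivial⟩, rfl⟩
  have h0T : (0 : EuclideanSpace ℝ (Fin n)) ∈ T := Or.inr (Or.inr rfl)
  -- pass to the subspace E and pick a good direction
  have hiso : Isometry (Subtype.val : E → EuclideanSpace ℝ (Fin n)) := fun x y => rfl
  have hBdim : dimH (Subtype.val ⁻¹' T : Set E) ≤ ((2 * m + 1 : ℕ) : ℝ≥0∞) :=
    le_trans (hiso.antilipschitz.dimH_preimage_le T) hdim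
  have hlt : dimH (Subtype.val ⁻¹' T : Set E) < (finrank ℝ E : ℝ≥0∞) :=
    lt_of_le_of_lt hBdim (by exact_mod_cast hd)
  obtain ⟨v, hv⟩ := (dense_compl_of_dimH_lt_finrank hlt).nonempty
  have hvT : (v : EuclideanSpace ℝ (Fin n)) ∉ T := hv
  refine ⟨v, v.2, ?_, ?_, ?_⟩
  · intro h0
    exact hvT (by rw [show (v : EuclideanSpace ℝ (Fin n)) = 0 from h0]; exact h0T)
  · intro p q t ht
    by_cases htz : t = 0
    · subst htz
      rw [zero_smul, sub_eq_zero] at ht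
      exact hinj ht
    · exfalso
      apply hvT
      have : (v : EuclideanSpace ℝ (Fin n)) = t⁻¹ • (f p - f q) := by
        rw [ht, smul_smul, inv_mul_cancel₀ htz, one_smul]
      rw [this]
      exact hsec p q t⁻¹
  · intro p w t ht
    by_cases htz : t = 0
    · rw [ht, htz, zero_smul]; rfl
    · exfalso
      apply hvT
      have : (v : EuclideanSpace ℝ (Fin n)) =
          mfderiv (𝓡 m) 𝓘(ℝ, EuclideanSpace ℝ (Fin n)) f p (t⁻¹ • w) := by
        have e : mfderiv (𝓡 m) 𝓘(ℝ, EuclideanSpace ℝ (Fin n)) f p (t⁻¹ • w) =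
            t⁻¹ • mfderiv (𝓡 m) 𝓘(ℝ, EuclideanSpace ℝ (Fin n)) f p w :=
          (mfderiv (𝓡 m) 𝓘(ℝ, EuclideanSpace ℝ (Fin n)) f p).map_smul t⁻¹ w
        rw [e, ht]
        exact (inv_smul_smul₀ htz (v : EuclideanSpace ℝ (Fin n))).symm
      rw [this]
      exact htan p (t⁻¹ • w)


/-- If `x ∈ E` and the orthogonal projection of `x` onto `(ℝ ∙ v)ᗮ ⊓ E` vanishes,
with `v ∈ E`, `v ≠ 0`, then `x` is a multiple of `v`. -/
theorem proj_zero_mem_span {n : ℕ} {E : Submodule ℝ (EuclideanSpace ℝ (Fin n))}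
    {v x : EuclideanSpace ℝ (Fin n)} (hv : v ∈ E) (hv0 : v ≠ 0) (hx : x ∈ E)
    (h : Submodule.orthogonalProjectionOnto ((ℝ ∙ v)ᗮ ⊓ E) x = 0) : ∃ t : ℝ, x = t • v := by
  have hvv : ⟪v, v⟫_ℝ ≠ 0 := inner_self_ne_zero.2 hv0
  set c : ℝ := ⟪v, x⟫_ℝ / ⟪v, v⟫_ℝ with hc
  set y : EuclideanSpace ℝ (Fin n) := x - c • v with hy
  have hvy : ⟪v, y⟫_ℝ = 0 := by
    rw [hy, inner_sub_right, real_inner_smul_right, hc,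
      div_mul_cancel₀ _ hvv, sub_self]
  have hymem : y ∈ (ℝ ∙ v)ᗮ ⊓ E := by
    refine ⟨?_, E.sub_mem hx (E.smul_mem _ hv)⟩
    intro u hu
    obtain ⟨t, rfl⟩ := Submodule.mem_span_singleton.1 hu
    rw [real_inner_smul_left, hvy, mul_zero]
  have hxperp : x ∈ ((ℝ ∙ v)ᗮ ⊓ E)ᗮ := Submodule.orthogonalProjectionOnto_eq_zero_iff.1 h
  have hyx : ⟪y, x⟫_ℝ = 0 := hxperp y hymem
  have hyy : ⟪y, y⟫_ℝ = 0 := by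
    rw [hy]
    rw [inner_sub_right, hyx, real_inner_smul_right]
    rw [real_inner_comm, hvy]
    ring
  have : y = 0 := inner_self_eq_zero.1 hyy
  exact ⟨c, by rw [← sub_eq_zero]; exact this⟩


theorem mfderiv_clm_comp_aux {m n : ℕ} {M : Type*} [TopologicalSpace M]
    [ChartedSpace (EuclideanSpace ℝ (Fin m)) M] [IsManifold (𝓡 m) (⊤ : ℕ∞) M]
    (ι : M → EuclideanSpace ℝ (Fin n))
    (hι : ContMDiff (𝓡 m) 𝓘(ℝ, EuclideanSpace ℝ (Fin n)) (⊤ : ℕ∞) ι)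
    (L : EuclideanSpace ℝ (Fin n) →L[ℝ] EuclideanSpace ℝ (Fin n)) (p : M) :
    mfderiv (𝓡 m) 𝓘(ℝ, EuclideanSpace ℝ (Fin n)) (fun x => L (ι x)) p =
      L.comp (mfderiv (𝓡 m) 𝓘(ℝ, EuclideanSpace ℝ (Fin n)) ι p) := by
  have h1 : MDifferentiableAt 𝓘(ℝ, EuclideanSpace ℝ (Fin n))
      𝓘(ℝ, EuclideanSpace ℝ (Fin n)) (⇑L) (ι p) :=
    mdifferentiableAt_iff_differentiableAt.2 L.differentiableAt
  have h2 := (hι p).mdifferentiableAt (by simp)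
  have h3 := mfderiv_comp p h1 h2
  rw [show (fun x => L (ι x)) = ⇑L ∘ ι from rfl, h3, mfderiv_eq_fderiv, L.fderiv]
  rfl

/-- **Projection form of Whitney's weak embedding theorem.**  Let `M` be a compact smooth
`m`-dimensional manifold smoothly embedded (via `ι`) in `ℝ^(m+k)` with `k > m + 1`.  Then
there is a linear projection `π` of `ℝ^(m+k)` onto a `(2m+1)`-dimensional subspace such that
`π` restricted to `M` (i.e. `π ∘ ι`) is again a smooth embedding: smooth, injective, an
immersion, and a topological embedding. -/
theorem whitney_projection_embedding (m k : ℕ) (hk : k > m + 1)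
    (M : Type*) [TopologicalSpace M]
    [ChartedSpace (EuclideanSpace ℝ (Fin m)) M]
    [IsManifold (𝓡 m) (⊤ : ℕ∞) M] [CompactSpace M]
    (ι : M → EuclideanSpace ℝ (Fin (m + k)))
    (hι_smooth : ContMDiff (𝓡 m) 𝓘(ℝ, EuclideanSpace ℝ (Fin (m + k))) (⊤ : ℕ∞) ι)
    (hι_inj : Injective ι)
    (hι_imm : ∀ p : M,
      Injective (mfderiv (𝓡 m) 𝓘(ℝ, EuclideanSpace ℝ (Fin (m + k))) ι p))
    (hι_emb : Topology.IsEmbedding ι) :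
    ∃ π : EuclideanSpace ℝ (Fin (m + k)) →ₗ[ℝ] EuclideanSpace ℝ (Fin (m + k)),
      π ∘ₗ π = π ∧
      Module.finrank ℝ (LinearMap.range π) = 2 * m + 1 ∧
      ContMDiff (𝓡 m) 𝓘(ℝ, EuclideanSpace ℝ (Fin (m + k))) (⊤ : ℕ∞) (π ∘ ι) ∧
      Injective (π ∘ ι) ∧
      (∀ p : M,
        Injective (mfderiv (𝓡 m) 𝓘(ℝ, EuclideanSpace ℝ (Fin (m + k))) (π ∘ ι) p)) ∧
      Topology.IsEmbedding (π ∘ ι) := by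
  classical
  -- the orthogonal projection onto a subspace, as a map `(EuclideanSpace ℝ (Fin (m + k))) →L[ℝ] (EuclideanSpace ℝ (Fin (m + k)))`
  let proj : Submodule ℝ (EuclideanSpace ℝ (Fin (m + k))) → ((EuclideanSpace ℝ (Fin (m + k))) →L[ℝ] (EuclideanSpace ℝ (Fin (m + k)))) :=
    fun E => E.subtypeL.comp (Submodule.orthogonalProjectionOnto E)
  have hproj_mem : ∀ (E : Submodule ℝ (EuclideanSpace ℝ (Fin (m + k)))) (x : EuclideanSpace ℝ (Fin (m + k))), proj E x ∈ E :=
    fun E x => SetLike.coe_mem _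
  have hproj_self : ∀ (E : Submodule ℝ (EuclideanSpace ℝ (Fin (m + k)))) (x : EuclideanSpace ℝ (Fin (m + k))), x ∈ E → proj E x = x :=
    fun E x hx => Submodule.starProjection_eq_self_iff.2 hx
  -- main downward induction
  have key : ∀ i : ℕ, i + (2 * m + 1) ≤ m + k → ∃ E : Submodule ℝ (EuclideanSpace ℝ (Fin (m + k))),
      finrank ℝ E = m + k - i ∧
      ContMDiff (𝓡 m) 𝓘(ℝ, EuclideanSpace ℝ (Fin (m + k))) (⊤ : ℕ∞) (fun x => proj E (ι x)) ∧
      Injective (fun x => proj E (ι x)) ∧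
      ∀ p, Injective (mfderiv (𝓡 m) 𝓘(ℝ, EuclideanSpace ℝ (Fin (m + k))) (fun x => proj E (ι x)) p) := by
    intro i
    induction i with
    | zero =>
      intro _
      have htop : (fun x => proj (⊤ : Submodule ℝ (EuclideanSpace ℝ (Fin (m + k)))) (ι x)) = ι :=
        funext fun x => hproj_self ⊤ (ι x) trivial
      refine ⟨⊤, ?_, ?_, ?_, ?_⟩
      · rw [finrank_top, finrank_euclideanSpace_fin]; omega
      · rw [htop]; exact hι_smooth
      · rw [htop]; exact hι_inj
      · rw [htop]; exact hι_imm
    | succ i ih =>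
      intro hi
      obtain ⟨E, hEr, hsm, hinj, himm⟩ := ih (by omega)
      have hd : 2 * m + 1 < finrank ℝ E := by omega
      obtain ⟨v, hvE, hv0, hsec, htan⟩ := whitney_avoid _ hsm hinj E hd
      set E' : Submodule ℝ (EuclideanSpace ℝ (Fin (m + k))) := (ℝ ∙ v)ᗮ ⊓ E with hE'
      have hle : E' ≤ E := inf_le_right
      have hrank : finrank ℝ E' = m + k - (i + 1) := by
        have h1 := Submodule.finrank_add_inf_finrank_orthogonal
          (K₁ := ℝ ∙ v) (K₂ := E) ((Submodule.span_singleton_le_iff_mem _ _).2 hvE)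
        rw [finrank_span_singleton hv0] at h1
        rw [← hE'] at h1
        omega
      have hpp : ∀ x : EuclideanSpace ℝ (Fin (m + k)), proj E' (proj E x) = proj E' x := fun x =>
        congrArg Subtype.val (Submodule.orthogonalProjectionOnto_starProjection_of_le hle x)
      -- the kernel property
      have hker : ∀ x : EuclideanSpace ℝ (Fin (m + k)), x ∈ E → proj E' x = 0 → ∃ t : ℝ, x = t • v := by
        intro x hx h
        refine proj_zero_mem_span hvE hv0 hx ?_
        have : (↑(Submodule.orthogonalProjectionOnto E' x) : EuclideanSpace ℝ (Fin (m + k))) = 0 := h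
        exact_mod_cast this
      -- smoothness
      have hsm' : ContMDiff (𝓡 m) 𝓘(ℝ, EuclideanSpace ℝ (Fin (m + k))) (⊤ : ℕ∞) (fun x => proj E' (ι x)) :=
        (proj E').contDiff.comp_contMDiff hι_smooth
      -- injectivity
      have hinj' : Injective (fun x => proj E' (ι x)) := by
        intro p q hpq
        simp only at hpq
        have h1 : proj E' (proj E (ι p) - proj E (ι q)) = 0 := by
          rw [map_sub, hpp, hpp, hpq, sub_self]
        obtain ⟨t, ht⟩ := hker _ (E.sub_mem (hproj_mem E (ι p)) (hproj_mem E (ι q))) h1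
        exact hsec p q t ht
      -- immersion
      have himm' : ∀ p, Injective (mfderiv (𝓡 m) 𝓘(ℝ, EuclideanSpace ℝ (Fin (m + k))) (fun x => proj E' (ι x)) p) := by
        intro p
        rw [injective_iff_map_eq_zero]
        intro w hw
        rw [mfderiv_clm_comp_aux ι hι_smooth (proj E') p] at hw
        have hcomp : (proj E').comp (proj E) = proj E' := ContinuousLinearMap.ext hpp
        have hgw : mfderiv (𝓡 m) 𝓘(ℝ, EuclideanSpace ℝ (Fin (m + k))) (fun x => proj E (ι x)) p w =
            proj E (mfderiv (𝓡 m) 𝓘(ℝ, EuclideanSpace ℝ (Fin (m + k))) ι p w) := by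
          rw [mfderiv_clm_comp_aux ι hι_smooth (proj E) p]; rfl
        have h2 : proj E' (mfderiv (𝓡 m) 𝓘(ℝ, EuclideanSpace ℝ (Fin (m + k))) (fun x => proj E (ι x)) p w) = 0 := by
          rw [hgw]
          exact (hpp _).trans hw
        obtain ⟨t, ht⟩ := hker _ (by rw [hgw]; exact hproj_mem E _) h2
        have h3 : mfderiv (𝓡 m) 𝓘(ℝ, EuclideanSpace ℝ (Fin (m + k))) (fun x => proj E (ι x)) p w = 0 := htan p w t ht
        have h4 : mfderiv (𝓡 m) 𝓘(ℝ, EuclideanSpace ℝ (Fin (m + k))) (fun x => proj E (ι x)) p w =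
            mfderiv (𝓡 m) 𝓘(ℝ, EuclideanSpace ℝ (Fin (m + k))) (fun x => proj E (ι x)) p 0 := by
          rw [h3, map_zero]
        exact himm p h4
      exact ⟨E', hrank, hsm', hinj', himm'⟩
  obtain ⟨E, hEr, hsm, hinj, himm⟩ := key (m + k - (2 * m + 1)) (by omega)
  have hE21 : finrank ℝ E = 2 * m + 1 := by omega
  refine ⟨(proj E : (EuclideanSpace ℝ (Fin (m + k))) →L[ℝ] (EuclideanSpace ℝ (Fin (m + k)))).toLinearMap, ?_, ?_, ?_, ?_, ?_, ?_⟩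
  · apply LinearMap.ext
    intro x
    exact hproj_self E (proj E x) (hproj_mem E x)
  · have hrange : LinearMap.range (proj E : (EuclideanSpace ℝ (Fin (m + k))) →L[ℝ] (EuclideanSpace ℝ (Fin (m + k)))).toLinearMap = E := by
      apply le_antisymm
      · rintro x ⟨y, rfl⟩
        exact hproj_mem E y
      · intro x hx
        exact ⟨x, hproj_self E x hx⟩
    rw [hrange, hE21]
  · exact hsm
  · exact hinj
  · exact himm
  · exact ((hsm.continuous).isClosedEmbedding hinj).toIsEmbedding
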